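/- If G is a finite simple graph without isolated vertices, then γ(G) ≤ γ_Zg(G) ≤ 2γ(G) − 1. -/

import Mathlib

/- Formalization of the domination games from "The variety of domination games".

A game is specified by a legality predicate `legal : List V → V → Prop`, where the list
records the previously played vertices (most recent first).  Players alternate moves;
each move must be legal; the game ends when no legal move exists.  Dominator wants to
minimize, Staller to maximize, the total number of moves.

`canEnd legal k turn h` states that, with history `h` and the player to move given by
`turn` (`true` = Dominator), Dominator can guarantee that at most `k` further moves are
played (against any play of Staller).  The value of the game under optimal play by both
players is then the least such `k` from the empty history. -/

/-- The closed neighborhood `N[v]` of a vertex. -/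
def closedNbhd {V : Type*} (G : SimpleGraph V) (v : V) : Set V :=
  insert v (G.neighborSet v)

/-- `⋃_{u ∈ h} N[u]` : the set of vertices dominated by the moves in `h`. -/
def dominatedBy {V : Type*} (G : SimpleGraph V) (h : List V) : Set V :=
  ⋃ u ∈ h, closedNbhd G u

/-- `⋃_{u ∈ h} N(u)` : the set of vertices totally dominated by the moves in `h`. -/
def totDominatedBy {V : Type*} (G : SimpleGraph V) (h : List V) : Set V :=
  ⋃ u ∈ h, G.neighborSet u

/-- Legality in the domination game: `N[v] \ ⋃_{j<i} N[v_j] ≠ ∅`. -/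
def dgLegal {V : Type*} (G : SimpleGraph V) (h : List V) (v : V) : Prop :=
  (closedNbhd G v \ dominatedBy G h).Nonempty

/-- Legality in the total domination game: `N(v) \ ⋃_{j<i} N(v_j) ≠ ∅`. -/
def tgLegal {V : Type*} (G : SimpleGraph V) (h : List V) (v : V) : Prop :=
  (G.neighborSet v \ totDominatedBy G h).Nonempty

/-- Legality in the Z-domination game on `G|A`: `N(v) \ (A ∪ ⋃_{j<i} N[v_j]) ≠ ∅`. -/
def zLegal {V : Type*} (G : SimpleGraph V) (A : Set V) (h : List V) (v : V) : Prop :=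
  (G.neighborSet v \ (A ∪ dominatedBy G h)).Nonempty

/-- Legality in the LL-domination game on `G|A`: `N[v] \ (A ∪ ⋃_{j<i} N(v_j)) ≠ ∅`. -/
def llLegal {V : Type*} (G : SimpleGraph V) (A : Set V) (h : List V) (v : V) : Prop :=
  (closedNbhd G v \ (A ∪ totDominatedBy G h)).Nonempty

/-- Legality in the L-domination game on `G|A`: as in the LL-game, and moreover no vertex
may be played twice. -/
def lLegal {V : Type*} (G : SimpleGraph V) (A : Set V) (h : List V) (v : V) : Prop :=
  llLegal G A h v ∧ v ∉ h

/-- `canEnd legal k turn h` : with previously played vertices `h` and the player to move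
given by `turn` (`true` = Dominator, `false` = Staller), Dominator has a strategy
guaranteeing that at most `k` further moves are made. -/
def canEnd {V : Type*} (legal : List V → V → Prop) : ℕ → Bool → List V → Prop
  | 0, _, h => ∀ v, ¬ legal h v
  | k+1, true, h => (∀ v, ¬ legal h v) ∨ ∃ v, legal h v ∧ canEnd legal k false (v :: h)
  | k+1, false, h => ∀ v, legal h v → canEnd legal k true (v :: h)

/-- The number of moves in the game with legality predicate `legal` when both players play
optimally (Dominator minimizing, Staller maximizing the number of moves); `dFirst = true`
means Dominator makes the first move. -/
noncomputable def gameVal {V : Type*} (legal : List V → V → Prop) (dFirst : Bool) : ℕ :=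
  sInf {k | canEnd legal k dFirst []}

/-- The game Z-domination number `γ_Zg(G|A)` (Dominator starts). -/
noncomputable def gammaZgA {V : Type*} (G : SimpleGraph V) (A : Set V) : ℕ :=
  gameVal (zLegal G A) true

/-- The Staller-start game Z-domination number `γ'_Zg(G|A)`. -/
noncomputable def gammaZgA' {V : Type*} (G : SimpleGraph V) (A : Set V) : ℕ :=
  gameVal (zLegal G A) false

/-- The game L-domination number `γ_Lg(G|A)` (Dominator starts). -/
noncomputable def gammaLgA {V : Type*} (G : SimpleGraph V) (A : Set V) : ℕ :=
  gameVal (lLegal G A) true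

/-- The Staller-start game L-domination number `γ'_Lg(G|A)`. -/
noncomputable def gammaLgA' {V : Type*} (G : SimpleGraph V) (A : Set V) : ℕ :=
  gameVal (lLegal G A) false

/-- The game LL-domination number `γ_LLg(G|A)` (Dominator starts). -/
noncomputable def gammaLLgA {V : Type*} (G : SimpleGraph V) (A : Set V) : ℕ :=
  gameVal (llLegal G A) true

/-- The Staller-start game LL-domination number `γ'_LLg(G|A)`. -/
noncomputable def gammaLLgA' {V : Type*} (G : SimpleGraph V) (A : Set V) : ℕ :=
  gameVal (llLegal G A) false

/-- The game domination number `γ_g(G)` (Dominator starts). -/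
noncomputable def gammaG {V : Type*} (G : SimpleGraph V) : ℕ :=
  gameVal (dgLegal G) true

/-- The game total domination number `γ_tg(G)` (Dominator starts). -/
noncomputable def gammaTg {V : Type*} (G : SimpleGraph V) : ℕ :=
  gameVal (tgLegal G) true

/-- The game Z-domination number `γ_Zg(G)` (Dominator starts). -/
noncomputable def gammaZg {V : Type*} (G : SimpleGraph V) : ℕ := gammaZgA G ∅

/-- The Staller-start game Z-domination number `γ'_Zg(G)`. -/
noncomputable def gammaZg' {V : Type*} (G : SimpleGraph V) : ℕ := gammaZgA' G ∅

/-- The game L-domination number `γ_Lg(G)` (Dominator starts). -/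
noncomputable def gammaLg {V : Type*} (G : SimpleGraph V) : ℕ := gammaLgA G ∅

/-- The Staller-start game L-domination number `γ'_Lg(G)`. -/
noncomputable def gammaLg' {V : Type*} (G : SimpleGraph V) : ℕ := gammaLgA' G ∅

/-- The game LL-domination number `γ_LLg(G)` (Dominator starts). -/
noncomputable def gammaLLg {V : Type*} (G : SimpleGraph V) : ℕ := gammaLLgA G ∅

/-- The Staller-start game LL-domination number `γ'_LLg(G)`. -/
noncomputable def gammaLLg' {V : Type*} (G : SimpleGraph V) : ℕ := gammaLLgA' G ∅

/-- `G` has no isolated vertices. -/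
def isolateFree {V : Type*} (G : SimpleGraph V) : Prop := ∀ v : V, ∃ u, G.Adj v u

/-- The domination number `γ(G)`. -/
noncomputable def domNum {V : Type*} (G : SimpleGraph V) : ℕ :=
  sInf {k | ∃ S : Finset V, S.card = k ∧ ∀ v : V, ∃ u ∈ S, v ∈ closedNbhd G u}

/-- The total domination number `γ_t(G)`. -/
noncomputable def totDomNum {V : Type*} (G : SimpleGraph V) : ℕ :=
  sInf {k | ∃ S : Finset V, S.card = k ∧ ∀ v : V, ∃ u ∈ S, G.Adj u v}

section Aux
open scoped Classical

variable {V : Type*}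

lemma dominatedBy_cons_mono (G : SimpleGraph V) (v : V) (h : List V) :
    dominatedBy G h ⊆ dominatedBy G (v :: h) := by
  intro x hx
  simp only [dominatedBy, Set.mem_iUnion, exists_prop] at hx ⊢
  obtain ⟨u, hu, hxu⟩ := hx
  exact ⟨u, List.mem_cons_of_mem _ hu, hxu⟩

lemma closedNbhd_subset_dominatedBy_cons (G : SimpleGraph V) (v : V) (h : List V) :
    closedNbhd G v ⊆ dominatedBy G (v :: h) := by
  intro x hx
  simp only [dominatedBy, Set.mem_iUnion, exists_prop]
  exact ⟨v, List.mem_cons_self, hx⟩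

noncomputable def finishedCount (G : SimpleGraph V) (D : Finset V) (h : List V) : ℕ :=
  (D.filter (fun u => closedNbhd G u ⊆ dominatedBy G h)).card

lemma finished_mono (G : SimpleGraph V) (D : Finset V) (v : V) (h : List V) :
    finishedCount G D h ≤ finishedCount G D (v :: h) := by
  apply Finset.card_le_card
  intro u hu
  simp only [Finset.mem_filter] at hu ⊢
  exact ⟨hu.1, hu.2.trans (dominatedBy_cons_mono G v h)⟩

lemma finished_succ (G : SimpleGraph V) (D : Finset V) (v : V) (h : List V) (u : V)
    (huD : u ∈ D) (hunf : ¬ closedNbhd G u ⊆ dominatedBy G h)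
    (hfin : closedNbhd G u ⊆ dominatedBy G (v :: h)) :
    finishedCount G D h + 1 ≤ finishedCount G D (v :: h) := by
  have hss : D.filter (fun u => closedNbhd G u ⊆ dominatedBy G h) ⊂
      D.filter (fun u => closedNbhd G u ⊆ dominatedBy G (v :: h)) := by
    constructor
    · intro x hx
      simp only [Finset.mem_filter] at hx ⊢
      exact ⟨hx.1, hx.2.trans (dominatedBy_cons_mono G v h)⟩
    · intro hc
      have := hc (by simp only [Finset.mem_filter]; exact ⟨huD, hfin⟩)
      simp only [Finset.mem_filter] at this
      exact hunf this.2
  exact Finset.card_lt_card hss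

lemma dominator_move (G : SimpleGraph V) (hG : isolateFree G) (D : Finset V)
    (hD : ∀ v : V, ∃ u ∈ D, v ∈ closedNbhd G u) (h : List V) (v0 : V)
    (hv0 : zLegal G ∅ h v0) :
    ∃ v, zLegal G ∅ h v ∧ finishedCount G D h + 1 ≤ finishedCount G D (v :: h) := by
  obtain ⟨w, hw1, hw2⟩ := hv0
  have hwdom : w ∉ dominatedBy G h := fun hc => hw2 (Or.inr hc)
  obtain ⟨u, huD, hwu⟩ := hD w
  have hunf : ¬ closedNbhd G u ⊆ dominatedBy G h := fun hc => hwdom (hc hwu)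
  by_cases hN : (G.neighborSet u \ dominatedBy G h).Nonempty
  · refine ⟨u, ?_, ?_⟩
    · obtain ⟨w', hw'1, hw'2⟩ := hN
      exact ⟨w', hw'1, fun hc => hc.elim (fun c => c.elim) hw'2⟩
    · exact finished_succ G D u h u huD hunf (closedNbhd_subset_dominatedBy_cons G u h)
  · have hNsub : G.neighborSet u ⊆ dominatedBy G h := by
      intro y hy
      by_contra hyc
      exact hN ⟨y, hy, hyc⟩
    have hwu' : w = u := by
      rcases hwu with h1 | h2
      · exact h1
      · exact absurd (hNsub h2) hwdom
    obtain ⟨x, hux⟩ := hG u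
    refine ⟨x, ?_, ?_⟩
    · refine ⟨u, hux.symm, fun hc => ?_⟩
      rcases hc with c | c
      · exact c.elim
      · rw [hwu'] at hwdom; exact hwdom c
    · apply finished_succ G D x h u huD hunf
      intro y hy
      rcases hy with h1 | h2
      · subst h1
        exact closedNbhd_subset_dominatedBy_cons G x h (Or.inr hux.symm)
      · exact dominatedBy_cons_mono G x h (hNsub h2)

lemma finished_full_no_legal (G : SimpleGraph V) (D : Finset V)
    (hD : ∀ v : V, ∃ u ∈ D, v ∈ closedNbhd G u) (h : List V)
    (hfull : D.card ≤ finishedCount G D h) : ∀ v, ¬ zLegal G ∅ h v := by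
  have heq : D.filter (fun u => closedNbhd G u ⊆ dominatedBy G h) = D :=
    Finset.eq_of_subset_of_card_le (Finset.filter_subset _ _) hfull
  intro v hv
  obtain ⟨w, hw1, hw2⟩ := hv
  obtain ⟨u, huD, hwu⟩ := hD w
  have : u ∈ D.filter (fun u => closedNbhd G u ⊆ dominatedBy G h) := by
    rw [heq]; exact huD
  simp only [Finset.mem_filter] at this
  exact hw2 (Or.inr (this.2 hwu))

lemma canEnd_of_finished (G : SimpleGraph V) (hG : isolateFree G) (D : Finset V)
    (hD : ∀ v : V, ∃ u ∈ D, v ∈ closedNbhd G u) : ∀ m : ℕ,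
    (∀ h, D.card ≤ finishedCount G D h + m → canEnd (zLegal G ∅) (2 * m - 1) true h) ∧
    (∀ h, D.card ≤ finishedCount G D h + m → canEnd (zLegal G ∅) (2 * m) false h) := by
  intro m
  induction m with
  | zero =>
    constructor
    · intro h hh
      exact finished_full_no_legal G D hD h (by omega)
    · intro h hh
      exact finished_full_no_legal G D hD h (by omega)
  | succ m ih =>
    have hP : ∀ h, D.card ≤ finishedCount G D h + (m + 1) →
        canEnd (zLegal G ∅) (2 * (m + 1) - 1) true h := by
      intro h hh
      have he : 2 * (m + 1) - 1 = 2 * m + 1 := by omega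
      rw [he]
      show (∀ v, ¬ zLegal G ∅ h v) ∨
        ∃ v, zLegal G ∅ h v ∧ canEnd (zLegal G ∅) (2 * m) false (v :: h)
      by_cases hleg : ∃ v, zLegal G ∅ h v
      · obtain ⟨v0, hv0⟩ := hleg
        obtain ⟨v, hv, hfin⟩ := dominator_move G hG D hD h v0 hv0
        exact Or.inr ⟨v, hv, ih.2 (v :: h) (by omega)⟩
      · exact Or.inl (fun v hv => hleg ⟨v, hv⟩)
    refine ⟨hP, ?_⟩
    intro h hh
    have he : 2 * (m + 1) = (2 * (m + 1) - 1) + 1 := by omega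
    rw [he]
    show ∀ v, zLegal G ∅ h v → canEnd (zLegal G ∅) (2 * (m + 1) - 1) true (v :: h)
    intro v hv
    have := finished_mono G D v h
    exact hP (v :: h) (by omega)

lemma exists_terminal {legal : List V → V → Prop} :
    ∀ (k : ℕ) (turn : Bool) (h : List V), canEnd legal k turn h →
    ∃ h' : List V, (∀ v, ¬ legal h' v) ∧ h'.length ≤ h.length + k := by
  intro k
  induction k with
  | zero =>
    intro turn h hc
    exact ⟨h, hc, by omega⟩
  | succ k ih =>
    intro turn h hc
    cases turn with
    | true =>
      have hc' : (∀ v, ¬ legal h v) ∨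
          ∃ v, legal h v ∧ canEnd legal k false (v :: h) := hc
      rcases hc' with hc' | ⟨v, _, hc'⟩
      · exact ⟨h, hc', by omega⟩
      · obtain ⟨h', h1, h2⟩ := ih false (v :: h) hc'
        exact ⟨h', h1, by simp at h2; omega⟩
    | false =>
      have hc' : ∀ v, legal h v → canEnd legal k true (v :: h) := hc
      by_cases hleg : ∃ v, legal h v
      · obtain ⟨v, hv⟩ := hleg
        obtain ⟨h', h1, h2⟩ := ih true (v :: h) (hc' v hv)
        exact ⟨h', h1, by simp at h2; omega⟩
      · exact ⟨h, fun v hv => hleg ⟨v, hv⟩, by omega⟩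

lemma terminal_dominating (G : SimpleGraph V) (hG : isolateFree G) (h : List V)
    (ht : ∀ v, ¬ zLegal G ∅ h v) : ∀ v : V, ∃ u ∈ h.toFinset, v ∈ closedNbhd G u := by
  intro v
  have hvdom : v ∈ dominatedBy G h := by
    by_contra hv
    obtain ⟨x, hx⟩ := hG v
    exact ht x ⟨v, hx.symm, fun hc => hc.elim (fun c => c.elim) hv⟩
  simp only [dominatedBy, Set.mem_iUnion, exists_prop] at hvdom
  obtain ⟨u, hu, hcu⟩ := hvdom
  exact ⟨u, List.mem_toFinset.2 hu, hcu⟩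

end Aux

/-- `γ(G) ≤ γ_Zg(G) ≤ 2γ(G) − 1`. -/
theorem gammaZg_bounds {V : Type*} [Fintype V] (G : SimpleGraph V)
    (hG : isolateFree G) :
    domNum G ≤ gammaZg G ∧ gammaZg G ≤ 2 * domNum G - 1 := by
  classical
  -- a minimum dominating set
  have hne : {k | ∃ S : Finset V, S.card = k ∧ ∀ v : V, ∃ u ∈ S, v ∈ closedNbhd G u}.Nonempty := by
    refine ⟨(Finset.univ : Finset V).card, Finset.univ, rfl, fun v => ⟨v, Finset.mem_univ v, Or.inl rfl⟩⟩
  obtain ⟨D, hcard, hD⟩ := Nat.sInf_mem hne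
  have hcanEnd : canEnd (zLegal G ∅) (2 * D.card - 1) true [] :=
    (canEnd_of_finished G hG D hD D.card).1 [] (by omega)
  have hmemS : (2 * D.card - 1) ∈ {k | canEnd (zLegal G ∅) k true []} := hcanEnd
  have hSne : {k | canEnd (zLegal G ∅) k true []}.Nonempty := ⟨_, hmemS⟩
  have hd : domNum G = D.card := hcard.symm
  have hupper : gammaZg G ≤ 2 * domNum G - 1 := by
    rw [hd]
    exact Nat.sInf_le hmemS
  refine ⟨?_, hupper⟩
  have hmem : canEnd (zLegal G ∅) (gammaZg G) true [] := Nat.sInf_mem hSne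
  obtain ⟨h', ht, hlen⟩ := exists_terminal (gammaZg G) true [] hmem
  have hdom := terminal_dominating G hG h' ht
  have h1 : domNum G ≤ h'.toFinset.card :=
    Nat.sInf_le ⟨h'.toFinset, rfl, hdom⟩
  have h2 : h'.toFinset.card ≤ h'.length := h'.toFinset_card_le
  simp only [List.length_nil, Nat.zero_add] at hlen
  omega
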